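/- (Dichotomy for final states, total-cost version.) With the same setting of the time-extended partial map F on D_F with cost function c_d, and disjoint G, B with G ⊔ B = {b} × X = D_F ∖ dom(F): for every ε ∈ [0,∞), D_F = G_{F,ε_Σ} ⊔ B_{F,−ε_Σ}. -/

import Mathlib

open scoped ENNReal

variable {Y : Type*}

/-- The domain of a partial map represented as `Y → Option Y`. -/
def pdom {Y : Type*} (F : Y → Option Y) : Set Y := {y | F y ≠ none}

/-- `IsCtrlPath F c ε y A n` : `y` admits an `ε`-controlled path of length `n` into `A`. -/
def IsCtrlPath {Y : Type*} (F : Y → Option Y) (c : Y → Y → ℝ≥0∞) (ε : ℝ≥0∞)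
    (y : Y) (A : Set Y) : ℕ → Prop
  | 0 => y ∈ A
  | (n + 1) => ∃ ys zs : ℕ → Y,
      (∀ i ≤ n, F (ys i) = some (zs i)) ∧
      c y (ys 0) ≤ ε ∧
      (∀ i < n, c (zs i) (ys (i + 1)) ≤ ε) ∧
      zs n ∈ A

/-- `ε_Σ`-controlled path: total perturbation cost at most `ε`. -/
def IsSumCtrlPath {Y : Type*} (F : Y → Option Y) (c : Y → Y → ℝ≥0∞) (ε : ℝ≥0∞)
    (y : Y) (A : Set Y) : ℕ → Prop
  | 0 => y ∈ A
  | (n + 1) => ∃ ys zs : ℕ → Y,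
      (∀ i ≤ n, F (ys i) = some (zs i)) ∧
      (c y (ys 0) + ∑ i ∈ Finset.range n, c (zs i) (ys (i + 1))) ≤ ε ∧
      zs n ∈ A

/-- The `ε`-attracting basin. -/
def basin {Y : Type*} (F : Y → Option Y) (c : Y → Y → ℝ≥0∞) (ε : ℝ≥0∞) (A : Set Y) : Set Y :=
  {y | ∃ n, IsCtrlPath F c ε y A n}

/-- The `ε_Σ`-attracting basin. -/
def sumBasin {Y : Type*} (F : Y → Option Y) (c : Y → Y → ℝ≥0∞) (ε : ℝ≥0∞) (A : Set Y) : Set Y :=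
  {y | ∃ n, IsSumCtrlPath F c ε y A n}

/-- The `-0`-attracting basin. -/
def negZeroBasin {Y : Type*} (F : Y → Option Y) (c : Y → Y → ℝ≥0∞) (A : Set Y) : Set Y :=
  basin F c 0 (A \ pdom F)

/-- The `-ε`-attracting basin. -/
def negBasin {Y : Type*} (F : Y → Option Y) (c : Y → Y → ℝ≥0∞) (ε : ℝ≥0∞) (A : Set Y) : Set Y :=
  {y | y ∈ negZeroBasin F c A ∧
    ∀ y', y' ∉ pdom F → y ∈ basin F c ε ({y'} : Set Y) → y' ∈ A}

/-- The `-ε_Σ`-attracting basin. -/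
def negSumBasin {Y : Type*} (F : Y → Option Y) (c : Y → Y → ℝ≥0∞) (ε : ℝ≥0∞) (A : Set Y) : Set Y :=
  {y | y ∈ sumBasin F c 0 (A \ pdom F) ∧
    ∀ y', y' ∉ pdom F → y ∈ sumBasin F c ε ({y'} : Set Y) → y' ∈ A}



/-- Iteration of a partial map `f : X → Option X`. -/
def iterOpt {X : Type*} (f : X → Option X) : ℕ → X → Option X
  | 0, x => some x
  | (n + 1), x => (iterOpt f n x).bind f

/-- The subset `D_F` of the time extension. -/
def DF {X : Type*} (f : X → Option X) (a b : ℤ) : Set (ℤ × X) :=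
  {p | ∃ n : ℕ, (n : ℤ) ≤ b - a ∧ p.1 = b - (n : ℤ) ∧ (iterOpt f n p.2).isSome}

open Classical in
/-- The restriction `F` of the time extension `f̃(t,x) = (t+1, f(x))` to `D_F`. -/
noncomputable def FF {X : Type*} (f : X → Option X) (a b : ℤ) :
    ↥(DF f a b) → Option ↥(DF f a b) :=
  fun p =>
    if h : ∃ q : ↥(DF f a b),
        (q : ℤ × X).1 = (p : ℤ × X).1 + 1 ∧ f (p : ℤ × X).2 = some (q : ℤ × X).2 then
      some h.choose
    else none

/-- The cost function on `D_F` associated to the metric `d`. -/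
noncomputable def cd {X : Type*} [MetricSpace X] (f : X → Option X) (a b : ℤ) :
    ↥(DF f a b) → ↥(DF f a b) → ℝ≥0∞ :=
  fun p q =>
    if (p : ℤ × X).1 = (q : ℤ × X).1 then edist (p : ℤ × X).2 (q : ℤ × X).2 else ⊤

section Aux

variable {Z : Type*}

lemma isSumCtrlPath_mono {F : Z → Option Z} {c : Z → Z → ℝ≥0∞} {ε ε' : ℝ≥0∞}
    {A A' : Set Z} (hε : ε ≤ ε') (hA : A ⊆ A') {y : Z} {n : ℕ}
    (h : IsSumCtrlPath F c ε y A n) : IsSumCtrlPath F c ε' y A' n := by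
  cases n with
  | zero => exact hA h
  | succ n =>
    obtain ⟨ys, zs, h1, h2, h3⟩ := h
    exact ⟨ys, zs, h1, h2.trans hε, hA h3⟩

lemma sumBasin_mono {F : Z → Option Z} {c : Z → Z → ℝ≥0∞} {ε ε' : ℝ≥0∞}
    {A A' : Set Z} (hε : ε ≤ ε') (hA : A ⊆ A') {y : Z}
    (h : y ∈ sumBasin F c ε A) : y ∈ sumBasin F c ε' A' := by
  obtain ⟨n, hn⟩ := h
  exact ⟨n, isSumCtrlPath_mono hε hA hn⟩

lemma sumBasin_prepend {F : Z → Option Z} {c : Z → Z → ℝ≥0∞}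
    (hc : ∀ y, c y y = 0) {ε : ℝ≥0∞} {A : Set Z} {p q : Z}
    (hpq : F p = some q) (h : q ∈ sumBasin F c ε A) : p ∈ sumBasin F c ε A := by
  obtain ⟨n, hn⟩ := h
  cases n with
  | zero =>
    exact ⟨1, fun _ => p, fun _ => q, fun i _ => hpq, by simp [hc], hn⟩
  | succ n =>
    obtain ⟨ys, zs, h1, h2, h3⟩ := hn
    refine ⟨n + 2, fun i => if i = 0 then p else ys (i - 1),
      fun i => if i = 0 then q else zs (i - 1), ?_, ?_, ?_⟩
    · intro i hi
      cases i with
      | zero => simpa using hpq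
      | succ j => simpa using h1 j (by omega)
    · simpa [hc, Finset.sum_range_succ', add_comm] using h2
    · simpa using h3

lemma sumBasin_endpoint {F : Z → Option Z} {c : Z → Z → ℝ≥0∞} {ε : ℝ≥0∞}
    {A : Set Z} {y : Z} (h : y ∈ sumBasin F c ε A) :
    ∃ z ∈ A, y ∈ sumBasin F c ε ({z} : Set Z) := by
  obtain ⟨n, hn⟩ := h
  cases n with
  | zero => exact ⟨y, hn, 0, rfl⟩
  | succ n =>
    obtain ⟨ys, zs, h1, h2, h3⟩ := hn
    exact ⟨zs n, h3, n + 1, ys, zs, h1, h2, rfl⟩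

lemma iterOpt_succ' {X : Type*} (f : X → Option X) (n : ℕ) (x : X) :
    iterOpt f (n + 1) x = (f x).bind (iterOpt f n) := by
  induction n generalizing x with
  | zero => cases h : f x <;> simp [iterOpt, h]
  | succ n ih =>
    show (iterOpt f (n + 1) x).bind f = _
    rw [ih]
    cases h : f x <;> simp [iterOpt]

lemma FF_final_none {X : Type*} (f : X → Option X) (a b : ℤ) (p : ↥(DF f a b))
    (hp : (p : ℤ × X).1 = b) : FF f a b p = none := by
  rw [FF, dif_neg]
  rintro ⟨q, hq1, -⟩
  obtain ⟨m, -, htq, -⟩ := q.2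
  omega

lemma FF_nonfinal {X : Type*} {f : X → Option X} {a b : ℤ} {p : ↥(DF f a b)}
    (hp : (p : ℤ × X).1 ≠ b) : ∃ q, FF f a b p = some q := by
  obtain ⟨n, hn, ht, hs⟩ := p.2
  have hn1 : n ≠ 0 := by rintro rfl; simp at ht; omega
  obtain ⟨m, rfl⟩ := Nat.exists_eq_succ_of_ne_zero hn1
  rw [iterOpt_succ'] at hs
  obtain ⟨y, hy⟩ : ∃ y, f (p : ℤ × X).2 = some y := by
    cases h : f (p : ℤ × X).2
    · rw [h] at hs; simp at hs
    · exact ⟨_, rfl⟩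
  rw [hy] at hs
  have hq : ((p : ℤ × X).1 + 1, y) ∈ DF f a b := by
    refine ⟨m, by push_cast at hn ⊢; omega, by simpa using by omega, ?_⟩
    simpa using hs
  have hex : ∃ q : ↥(DF f a b),
      (q : ℤ × X).1 = (p : ℤ × X).1 + 1 ∧ f (p : ℤ × X).2 = some (q : ℤ × X).2 :=
    ⟨⟨_, hq⟩, rfl, hy⟩
  rw [FF, dif_pos hex]
  exact ⟨_, rfl⟩

lemma FF_some_fst {X : Type*} {f : X → Option X} {a b : ℤ} {p q : ↥(DF f a b)}
    (h : FF f a b p = some q) : (q : ℤ × X).1 = (p : ℤ × X).1 + 1 := by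
  rw [FF] at h
  split_ifs at h with hq
  · injection h with h
    exact h ▸ hq.choose_spec.1
  all_goals simp_all

lemma cd_self {X : Type*} [MetricSpace X] (f : X → Option X) (a b : ℤ)
    (p : ↥(DF f a b)) : cd f a b p p = 0 := by
  simp [cd]

lemma reach_final {X : Type*} [MetricSpace X] (f : X → Option X) (a b : ℤ)
    (p : ↥(DF f a b)) : ∃ z : ↥(DF f a b), (z : ℤ × X).1 = b ∧
      p ∈ sumBasin (FF f a b) (cd f a b) 0 ({z} : Set ↥(DF f a b)) := by
  suffices H : ∀ n : ℕ, ∀ p : ↥(DF f a b), (p : ℤ × X).1 = b - n →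
      ∃ z : ↥(DF f a b), (z : ℤ × X).1 = b ∧
        p ∈ sumBasin (FF f a b) (cd f a b) 0 ({z} : Set ↥(DF f a b)) by
    obtain ⟨n, -, ht, -⟩ := p.2
    exact H n p ht
  intro n
  induction n with
  | zero =>
    intro p ht
    exact ⟨p, by simpa using ht, 0, rfl⟩
  | succ n ih =>
    intro p ht
    have hp : (p : ℤ × X).1 ≠ b := by omega
    obtain ⟨q, hq⟩ := FF_nonfinal hp
    have hq1 := FF_some_fst hq
    obtain ⟨z, hz, hmem⟩ := ih q (by omega)
    exact ⟨z, hz, sumBasin_prepend (cd_self f a b) hq hmem⟩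

end Aux

theorem stmt14 {X : Type*} [MetricSpace X] (f : X → Option X) (a b : ℤ) (hab : a < b)
    (G B : Set ↥(DF f a b)) (hGB : Disjoint G B)
    (hcov : G ∪ B = {p : ↥(DF f a b) | (p : ℤ × X).1 = b})
    (ε : ℝ≥0∞) (hε : ε ≠ ⊤) :
    sumBasin (FF f a b) (cd f a b) ε G ∪ negSumBasin (FF f a b) (cd f a b) ε B = Set.univ ∧
    Disjoint (sumBasin (FF f a b) (cd f a b) ε G)
      (negSumBasin (FF f a b) (cd f a b) ε B) := by
  have hfinal_not_dom : ∀ z : ↥(DF f a b), (z : ℤ × X).1 = b → z ∉ pdom (FF f a b) := by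
    intro z hz hmem
    exact hmem (FF_final_none f a b z hz)
  have hnot_dom_final : ∀ z : ↥(DF f a b), z ∉ pdom (FF f a b) → (z : ℤ × X).1 = b := by
    intro z hz
    by_contra hzb
    obtain ⟨q, hq⟩ := FF_nonfinal hzb
    exact hz (by simp [pdom, hq])
  constructor
  · rw [Set.eq_univ_iff_forall]
    intro p
    by_cases hG : p ∈ sumBasin (FF f a b) (cd f a b) ε G
    · exact Or.inl hG
    · refine Or.inr ⟨?_, ?_⟩
      · obtain ⟨z, hz, hmem⟩ := reach_final f a b p
        have hznd := hfinal_not_dom z hz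
        have hzGB : z ∈ G ∪ B := by rw [hcov]; exact hz
        cases hzGB with
        | inl h =>
          exact absurd (sumBasin_mono (zero_le : 0 ≤ ε) (Set.singleton_subset_iff.2 h) hmem) hG
        | inr h =>
          exact sumBasin_mono le_rfl (Set.singleton_subset_iff.2 ((Set.mem_diff _).2 ⟨h, hznd⟩)) hmem
      · intro y' hy' hmem
        have hyb : (y' : ℤ × X).1 = b := hnot_dom_final y' hy'
        have hyGB : y' ∈ G ∪ B := by rw [hcov]; exact hyb
        cases hyGB with
        | inl h =>
          exact absurd (sumBasin_mono le_rfl (Set.singleton_subset_iff.2 h) hmem) hG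
        | inr h => exact h
  · rw [Set.disjoint_left]
    intro p hpG hpB
    obtain ⟨z, hzG, hmem⟩ := sumBasin_endpoint hpG
    have hzb : (z : ℤ × X).1 = b := by
      have : z ∈ G ∪ B := Or.inl hzG
      rw [hcov] at this
      exact this
    have hzB := hpB.2 z (hfinal_not_dom z hzb) hmem
    exact Set.disjoint_left.mp hGB hzG hzB
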